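/- Let X be a nonnegative random variable with cumulative distribution function F, finite mean μ = ∫₀^∞ (1 − F(x)) dx and finite variance σ² = ∫₀^∞ 2x(1 − F(x)) dx − μ². Then for every n ≥ 1, the mean of the largest order statistic from a sample of n i.i.d. copies of X satisfies μ_{n:n} ≤ σ(n − 1)/√(2n − 1) + μ (the Hartley–David–Gumbel bound for a parent distribution with mean μ and variance σ²). -/

import Mathlib

open MeasureTheory ProbabilityTheory Set

section HDGauxSec
open Filter ENNReal
namespace HDGaux


/-- lintegral of 2x over a "lower" subset of (0,∞) of finite measure equals (measure)². -/
lemma lintegral_two_mul_lower {A : Set ℝ} (hA : MeasurableSet A) (hsub : A ⊆ Ioi 0)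
    (hlow : ∀ ⦃x y : ℝ⦄, x ∈ A → 0 < y → y < x → y ∈ A) (hfin : volume A ≠ ∞) :
    ∫⁻ x in A, ENNReal.ofReal (2 * x) = (volume A) ^ 2 := by
  set t : ℝ := (volume A).toReal with ht
  have ht0 : 0 ≤ t := ENNReal.toReal_nonneg
  have hvol : volume A = ENNReal.ofReal t := by
    rw [ht, ENNReal.ofReal_toReal hfin]
  have hsub2 : A ⊆ Ioc 0 t := by
    intro x hx
    refine ⟨hsub hx, ?_⟩
    have h1 : Ioo 0 x ⊆ A := fun y hy => hlow hx hy.1 hy.2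
    have h2 : volume (Ioo 0 x) ≤ volume A := measure_mono h1
    rw [Real.volume_Ioo, hvol, sub_zero] at h2
    exact le_of_not_gt fun hc => absurd ((ENNReal.ofReal_lt_ofReal_iff_of_nonneg ht0).2 hc)
      (not_lt.2 h2)
  have hsub1 : Ioo 0 t ⊆ A := by
    intro b hb
    by_contra hbA
    have : A ⊆ Ioc 0 b := by
      intro x hx
      refine ⟨hsub hx, le_of_not_gt fun hc => hbA (hlow hx hb.1 hc)⟩
    have h2 : volume A ≤ volume (Ioc 0 b) := measure_mono this
    rw [Real.volume_Ioc, hvol, sub_zero] at h2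
    have := (ENNReal.ofReal_le_ofReal_iff (le_of_lt hb.1)).1 h2
    linarith [hb.2]
  have hAeq : A =ᵐ[volume] Ioo 0 t := by
    have h1 : volume (A \ Ioo 0 t) = 0 := by
      have : A \ Ioo 0 t ⊆ {t} := by
        intro x hx
        rcases hx with ⟨hxA, hxn⟩
        have := hsub2 hxA
        simp only [mem_Ioo, not_and, not_lt] at hxn
        exact mem_singleton_iff.2 (le_antisymm this.2 (hxn this.1))
      exact measure_mono_null this (measure_singleton t)
    have h2 : volume (Ioo 0 t \ A) = 0 := by
      rw [diff_eq_empty.2 hsub1]; simp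
    rw [Filter.eventuallyEq_set]
    exact MeasureTheory.ae_iff.2 (by
      have : {x | ¬(x ∈ A ↔ x ∈ Ioo 0 t)} ⊆ (A \ Ioo 0 t) ∪ (Ioo 0 t \ A) := by
        intro x hx
        simp only [mem_setOf_eq, iff_iff_implies_and_implies, not_and_or] at hx
        rcases hx with h | h
        · left; exact ⟨_root_.not_imp.1 h |>.1, _root_.not_imp.1 h |>.2⟩
        · right; exact ⟨_root_.not_imp.1 h |>.1, _root_.not_imp.1 h |>.2⟩
      exact measure_mono_null this (by rw [measure_union_null h1 h2]))
  rw [setLIntegral_congr hAeq, hvol]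
  have hint : IntegrableOn (fun x : ℝ => 2 * x) (Ioo 0 t) volume :=
    ((continuous_const.mul continuous_id).integrableOn_Icc).mono_set Ioo_subset_Icc_self
  have hnn : 0 ≤ᵐ[volume.restrict (Ioo 0 t)] fun x : ℝ => 2 * x := by
    filter_upwards [ae_restrict_mem measurableSet_Ioo] with x hx
    exact mul_nonneg (by norm_num) hx.1.le
  rw [← ofReal_integral_eq_lintegral_ofReal hint hnn]
  have : ∫ x in Ioo 0 t, 2 * x = t ^ 2 := by
    rw [← integral_Ioc_eq_integral_Ioo, ← intervalIntegral.integral_of_le ht0,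
      intervalIntegral.integral_const_mul, integral_id]
    ring
  rw [this, ← ENNReal.ofReal_pow ht0]



lemma swap_lemma {F : ℝ → ℝ} (hF : Measurable F) (hF0 : ∀ x, 0 ≤ F x)
    (w g : ℝ → ℝ≥0∞) (hw : Measurable w) (hg : Measurable g) :
    ∫⁻ x in Ioi (0:ℝ), w x * ∫⁻ v in Ioo (F x) 1, g v
      = ∫⁻ v in Ioo (0:ℝ) 1, g v * ∫⁻ x in {x | 0 < x ∧ F x < v}, w x := by
  set f : ℝ → ℝ → ℝ≥0∞ := fun x v => if F x < v then w x * g v else 0 with hf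
  have hmeas : AEMeasurable (Function.uncurry f)
      ((volume.restrict (Ioi (0:ℝ))).prod (volume.restrict (Ioo (0:ℝ) 1))) := by
    have hs : MeasurableSet {p : ℝ × ℝ | F p.1 < p.2} :=
      measurableSet_lt (hF.comp measurable_fst) measurable_snd
    exact (Measurable.ite hs ((hw.comp measurable_fst).mul (hg.comp measurable_snd))
      measurable_const).aemeasurable
  have hswap := lintegral_lintegral_swap hmeas
  have hL : ∀ x : ℝ, ∫⁻ v in Ioo (0:ℝ) 1, f x v = w x * ∫⁻ v in Ioo (F x) 1, g v := by
    intro x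
    have hset : Ioo (0:ℝ) 1 ∩ {v | F x < v} = Ioo (F x) 1 := by
      ext v
      simp only [mem_inter_iff, mem_Ioo, mem_setOf_eq]
      constructor
      · rintro ⟨⟨_, h1⟩, h2⟩; exact ⟨h2, h1⟩
      · rintro ⟨h1, h2⟩; exact ⟨⟨lt_of_le_of_lt (hF0 x) h1, h2⟩, h1⟩
    calc ∫⁻ v in Ioo (0:ℝ) 1, f x v
        = ∫⁻ v in Ioo (0:ℝ) 1, {v : ℝ | F x < v}.indicator (fun v => w x * g v) v := by
          refine lintegral_congr fun v => ?_
          simp [hf, indicator_apply, mem_setOf_eq]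
      _ = ∫⁻ v in Ioo (0:ℝ) 1 ∩ {v | F x < v}, w x * g v := by
          have hms : MeasurableSet {v : ℝ | F x < v} := measurableSet_Ioi
          rw [lintegral_indicator₀ hms.nullMeasurableSet,
            Measure.restrict_restrict hms, inter_comm]
      _ = ∫⁻ v in Ioo (F x) 1, w x * g v := by rw [hset]
      _ = w x * ∫⁻ v in Ioo (F x) 1, g v := lintegral_const_mul _ hg
  have hR : ∀ v : ℝ, ∫⁻ x in Ioi (0:ℝ), f x v = g v * ∫⁻ x in {x | 0 < x ∧ F x < v}, w x := by
    intro v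
    have hset : Ioi (0:ℝ) ∩ {x | F x < v} = {x | 0 < x ∧ F x < v} := by
      ext x; simp [mem_inter_iff, mem_Ioi, mem_setOf_eq]
    calc ∫⁻ x in Ioi (0:ℝ), f x v
        = ∫⁻ x in Ioi (0:ℝ), {x : ℝ | F x < v}.indicator (fun x => w x * g v) x := by
          refine lintegral_congr fun x => ?_
          simp [hf, indicator_apply, mem_setOf_eq]
      _ = ∫⁻ x in Ioi (0:ℝ) ∩ {x | F x < v}, w x * g v := by
          have hms : MeasurableSet {x : ℝ | F x < v} := hF measurableSet_Iio
          rw [lintegral_indicator₀ hms.nullMeasurableSet,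
            Measure.restrict_restrict hms, inter_comm]
      _ = ∫⁻ x in {x | 0 < x ∧ F x < v}, w x * g v := by rw [hset]
      _ = ∫⁻ x in {x | 0 < x ∧ F x < v}, g v * w x := by simp [mul_comm]
      _ = g v * ∫⁻ x in {x | 0 < x ∧ F x < v}, w x := lintegral_const_mul _ hw
  calc ∫⁻ x in Ioi (0:ℝ), w x * ∫⁻ v in Ioo (F x) 1, g v
      = ∫⁻ x in Ioi (0:ℝ), ∫⁻ v in Ioo (0:ℝ) 1, f x v := by
        exact lintegral_congr fun x => (hL x).symm
    _ = ∫⁻ v in Ioo (0:ℝ) 1, ∫⁻ x in Ioi (0:ℝ), f x v := hswap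
    _ = ∫⁻ v in Ioo (0:ℝ) 1, g v * ∫⁻ x in {x | 0 < x ∧ F x < v}, w x :=
        lintegral_congr fun v => hR v



lemma lintegral_npow_Ioo {k : ℕ} {a : ℝ} (h0 : 0 ≤ a) (h1 : a ≤ 1) :
    ∫⁻ v in Ioo a 1, ENNReal.ofReal (((k : ℝ) + 1) * v ^ k) = ENNReal.ofReal (1 - a ^ (k + 1)) := by
  have hint : IntegrableOn (fun v : ℝ => ((k : ℝ) + 1) * v ^ k) (Ioo a 1) volume :=
    ((continuous_const.mul (continuous_pow _)).integrableOn_Icc).mono_set Ioo_subset_Icc_self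
  have hnn : 0 ≤ᵐ[volume.restrict (Ioo a 1)] fun v : ℝ => ((k : ℝ) + 1) * v ^ k := by
    filter_upwards [ae_restrict_mem measurableSet_Ioo] with v hv
    have hv0 : (0:ℝ) ≤ v := le_trans h0 hv.1.le
    positivity
  rw [← ofReal_integral_eq_lintegral_ofReal hint hnn]
  congr 1
  rw [← integral_Ioc_eq_integral_Ioo, ← intervalIntegral.integral_of_le h1,
    intervalIntegral.integral_const_mul, integral_pow]
  have hne : ((k:ℝ) + 1) ≠ 0 := by positivity
  field_simp
  simp

lemma lintegral_one_Ioo {a : ℝ} :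
    ∫⁻ _ in Ioo a 1, (1 : ℝ≥0∞) = ENNReal.ofReal (1 - a) := by
  rw [setLIntegral_one, Real.volume_Ioo]



lemma le_sqrt_mul_of_forall {A P S : ℝ} (hP : 0 ≤ P) (hS : 0 ≤ S)
    (h : ∀ t : ℝ, 0 < t → A ≤ t / 2 * P + 1 / (2 * t) * S) :
    A ≤ Real.sqrt P * Real.sqrt S := by
  set p := Real.sqrt P with hp
  set s := Real.sqrt S with hs
  have hp0 : 0 ≤ p := Real.sqrt_nonneg _
  have hs0 : 0 ≤ s := Real.sqrt_nonneg _
  have hPp : P = p ^ 2 := (Real.sq_sqrt hP).symm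
  have hSs : S = s ^ 2 := (Real.sq_sqrt hS).symm
  have key : ∀ ε : ℝ, 0 < ε → A ≤ (p + ε) * (s + ε) := by
    intro ε hε
    have hpε : 0 < p + ε := by linarith
    have hsε : 0 < s + ε := by linarith
    have ht : 0 < (s + ε) / (p + ε) := div_pos hsε hpε
    have h1 := h _ ht
    have hPle : P ≤ (p + ε) ^ 2 := by nlinarith
    have hSle : S ≤ (s + ε) ^ 2 := by nlinarith
    have h2 : (s + ε) / (p + ε) / 2 * P + 1 / (2 * ((s + ε) / (p + ε))) * S
        ≤ (s + ε) / (p + ε) / 2 * ((p + ε) ^ 2) + 1 / (2 * ((s + ε) / (p + ε))) * ((s + ε) ^ 2) := by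
      gcongr <;> positivity
    have h3 : (s + ε) / (p + ε) / 2 * ((p + ε) ^ 2) + 1 / (2 * ((s + ε) / (p + ε))) * ((s + ε) ^ 2)
        = (p + ε) * (s + ε) := by
      field_simp
      ring
    linarith
  refine le_of_forall_pos_le_add fun δ hδ => ?_
  have hC : (0:ℝ) < p + s + 1 := by linarith
  set ε := min 1 (δ / (p + s + 1)) with hε
  have hε0 : 0 < ε := lt_min one_pos (div_pos hδ hC)
  have hε1 : ε ≤ 1 := min_le_left _ _
  have hεδ : ε * (p + s + 1) ≤ δ := by
    calc ε * (p + s + 1) ≤ δ / (p + s + 1) * (p + s + 1) := by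
          exact mul_le_mul_of_nonneg_right (min_le_right _ _) hC.le
      _ = δ := by field_simp
  have := key ε hε0
  nlinarith [this, hεδ, hε0, hε1, hp0, hs0]



lemma one_sub_pow_le {u : ℝ} (h0 : 0 ≤ u) (h1 : u ≤ 1) (k : ℕ) :
    1 - u ^ (k + 1) ≤ ((k : ℝ) + 1) * (1 - u) := by
  induction k with
  | zero => simp
  | succ k ih =>
    have hup : u ^ (k + 1) ≤ 1 := pow_le_one₀ h0 h1
    have h2 : 1 - u ^ (k + 2) = (1 - u ^ (k + 1)) + u ^ (k + 1) * (1 - u) := by ring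
    have h3 : u ^ (k + 1) * (1 - u) ≤ 1 * (1 - u) :=
      mul_le_mul_of_nonneg_right hup (by linarith)
    push_cast
    push_cast at ih
    linarith

end HDGaux
end HDGauxSec

open scoped ENNReal
open Filter

/-- **Hartley–David–Gumbel bound.** For a nonnegative random variable with cdf
`F = cdf μ`, finite mean `m = ∫₀^∞ (1 - F x) dx` and finite variance
`σ² = ∫₀^∞ 2x (1 - F x) dx - m²`, the mean `μ_{n:n} = ∫₀^∞ (1 - (F x)^n) dx` of the largest
order statistic of a sample of size `n ≥ 1` satisfies `μ_{n:n} ≤ σ (n-1)/√(2n-1) + m`. -/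
theorem max_order_stat_le_hartley_david_gumbel
    (μ : Measure ℝ) [IsProbabilityMeasure μ] (hnonneg : μ (Set.Iio 0) = 0)
    (hmean : IntegrableOn (fun x => 1 - cdf μ x) (Set.Ioi 0) volume)
    (hmom2 : IntegrableOn (fun x => 2 * x * (1 - cdf μ x)) (Set.Ioi 0) volume)
    (m σ : ℝ) (hm : m = ∫ x in Set.Ioi (0 : ℝ), (1 - cdf μ x))
    (hσ : σ = Real.sqrt ((∫ x in Set.Ioi (0 : ℝ), 2 * x * (1 - cdf μ x)) - m ^ 2)) :
    ∀ n : ℕ, 1 ≤ n →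
      (∫ x in Set.Ioi (0 : ℝ), (1 - (cdf μ x) ^ n))
        ≤ σ * ((n : ℝ) - 1) / Real.sqrt (2 * (n : ℝ) - 1) + m := by
  intro n hn
  obtain ⟨k, rfl⟩ : ∃ k, n = k + 1 := ⟨n - 1, (Nat.succ_pred_eq_of_pos hn).symm⟩
  set F : ℝ → ℝ := (cdf μ : ℝ → ℝ) with hFdef
  have hFmono : Monotone F := monotone_cdf μ
  have hF : Measurable F := hFmono.measurable
  have hF0 : ∀ x, 0 ≤ F x := fun x => cdf_nonneg μ x
  have hF1 : ∀ x, F x ≤ 1 := fun x => cdf_le_one μ x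
  set A : ℝ → Set ℝ := fun v => {x | 0 < x ∧ F x < v} with hAdef
  have hAmeas : ∀ v, MeasurableSet (A v) := fun v => by
    exact (measurableSet_Ioi.inter (hF measurableSet_Iio))
  have hAfin : ∀ v ∈ Ioo (0:ℝ) 1, volume (A v) ≠ ⊤ := by
    intro v hv
    have h1 : ∀ᶠ x in Filter.atTop, v < F x :=
      (tendsto_cdf_atTop μ).eventually (eventually_gt_nhds hv.2)
    obtain ⟨x₀, hx₀⟩ := h1.exists_forall_of_atTop
    have hsub : A v ⊆ Ioo 0 x₀ := by
      intro x hx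
      refine ⟨hx.1, ?_⟩
      by_contra hc
      exact absurd hx.2 (not_lt.2 (hx₀ x (not_lt.1 hc)).le)
    exact ne_of_lt (lt_of_le_of_lt (measure_mono hsub)
      (by rw [Real.volume_Ioo]; exact ENNReal.ofReal_lt_top))
  have hQm : Measurable fun v => volume (A v) := by
    have hs : MeasurableSet {p : ℝ × ℝ | 0 < p.1 ∧ F p.1 < p.2} :=
      (measurableSet_lt measurable_const measurable_fst).inter
        (measurableSet_lt (hF.comp measurable_fst) measurable_snd)
    exact measurable_measure_prodMk_right hs
  set Q : ℝ → ℝ := fun v => (volume (A v)).toReal with hQdef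
  have hQmeas : Measurable Q := hQm.ennreal_toReal
  have hQ0 : ∀ v, 0 ≤ Q v := fun _ => ENNReal.toReal_nonneg
  -- Identity I1
  have I1 : ∫⁻ x in Ioi (0:ℝ), ENNReal.ofReal (1 - F x)
      = ∫⁻ v in Ioo (0:ℝ) 1, volume (A v) := by
    have h := HDGaux.swap_lemma hF hF0 (fun _ => 1) (fun _ => 1)
      measurable_const measurable_const
    calc ∫⁻ x in Ioi (0:ℝ), ENNReal.ofReal (1 - F x)
        = ∫⁻ x in Ioi (0:ℝ), (1:ℝ≥0∞) * ∫⁻ _ in Ioo (F x) 1, (1:ℝ≥0∞) := by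
          refine lintegral_congr fun x => ?_
          rw [HDGaux.lintegral_one_Ioo, one_mul]
      _ = ∫⁻ v in Ioo (0:ℝ) 1, (1:ℝ≥0∞) * ∫⁻ x in A v, (1:ℝ≥0∞) := h
      _ = ∫⁻ v in Ioo (0:ℝ) 1, volume (A v) := by
          refine lintegral_congr fun v => ?_
          rw [one_mul, setLIntegral_one]
  -- Identity I3
  have hgmeas : Measurable fun v : ℝ => ENNReal.ofReal (((k:ℝ)+1) * v ^ k) :=
    (measurable_const.mul (measurable_id.pow_const k)).ennreal_ofReal
  have I3 : ∫⁻ x in Ioi (0:ℝ), ENNReal.ofReal (1 - F x ^ (k+1))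
      = ∫⁻ v in Ioo (0:ℝ) 1, ENNReal.ofReal (((k:ℝ)+1) * v ^ k) * volume (A v) := by
    have h := HDGaux.swap_lemma hF hF0 (fun _ => 1)
      (fun v => ENNReal.ofReal (((k:ℝ)+1) * v ^ k)) measurable_const hgmeas
    calc ∫⁻ x in Ioi (0:ℝ), ENNReal.ofReal (1 - F x ^ (k+1))
        = ∫⁻ x in Ioi (0:ℝ), (1:ℝ≥0∞) * ∫⁻ v in Ioo (F x) 1,
            ENNReal.ofReal (((k:ℝ)+1) * v ^ k) := by
          refine lintegral_congr fun x => ?_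
          rw [HDGaux.lintegral_npow_Ioo (hF0 x) (hF1 x), one_mul]
      _ = ∫⁻ v in Ioo (0:ℝ) 1, ENNReal.ofReal (((k:ℝ)+1) * v ^ k)
            * ∫⁻ x in A v, (1:ℝ≥0∞) := h
      _ = ∫⁻ v in Ioo (0:ℝ) 1, ENNReal.ofReal (((k:ℝ)+1) * v ^ k) * volume (A v) := by
          refine lintegral_congr fun v => ?_
          rw [setLIntegral_one]
  -- Identity I2
  have hwmeas : Measurable fun x : ℝ => ENNReal.ofReal (2 * x) :=
    (measurable_const.mul measurable_id).ennreal_ofReal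
  have I2 : ∫⁻ x in Ioi (0:ℝ), ENNReal.ofReal (2 * x * (1 - F x))
      = ∫⁻ v in Ioo (0:ℝ) 1, (volume (A v)) ^ 2 := by
    have h := HDGaux.swap_lemma hF hF0 (fun x => ENNReal.ofReal (2 * x)) (fun _ => 1)
      hwmeas measurable_const
    calc ∫⁻ x in Ioi (0:ℝ), ENNReal.ofReal (2 * x * (1 - F x))
        = ∫⁻ x in Ioi (0:ℝ), ENNReal.ofReal (2 * x) * ∫⁻ _ in Ioo (F x) 1, (1:ℝ≥0∞) := by
          refine setLIntegral_congr_fun measurableSet_Ioi (fun x hx => ?_)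
          rw [HDGaux.lintegral_one_Ioo, ← ENNReal.ofReal_mul (by nlinarith [mem_Ioi.1 hx])]
      _ = ∫⁻ v in Ioo (0:ℝ) 1, (1:ℝ≥0∞) * ∫⁻ x in A v, ENNReal.ofReal (2 * x) := h
      _ = ∫⁻ v in Ioo (0:ℝ) 1, (volume (A v)) ^ 2 := by
          refine setLIntegral_congr_fun measurableSet_Ioo (fun v hv => ?_)
          rw [one_mul, HDGaux.lintegral_two_mul_lower (hAmeas v)
            (fun x hx => hx.1)
            (fun x y hx hy0 hyx => ⟨hy0, lt_of_le_of_lt (hFmono hyx.le) hx.2⟩)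
            (hAfin v hv)]
  -- finiteness of the lintegrals
  have hfin1 : ∫⁻ x in Ioi (0:ℝ), ENNReal.ofReal (1 - F x) ≠ ⊤ := by
    have h2 := (hasFiniteIntegral_iff_ofReal
      (ae_of_all _ fun x => by simp only [Pi.zero_apply]; linarith [hF1 x])).1 hmean.2
    exact ne_of_lt h2
  have hfin2 : ∫⁻ x in Ioi (0:ℝ), ENNReal.ofReal (2 * x * (1 - F x)) ≠ ⊤ := by
    have hnn : 0 ≤ᵐ[volume.restrict (Ioi (0:ℝ))] fun x => 2 * x * (1 - F x) := by
      filter_upwards [ae_restrict_mem measurableSet_Ioi] with x hx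
      have h1 := hF1 x
      have h2 := mem_Ioi.1 hx
      simp only [Pi.zero_apply]
      nlinarith
    exact ne_of_lt ((hasFiniteIntegral_iff_ofReal hnn).1 hmom2.2)
  -- conversion to real integrals via Q
  have hQofReal : ∀ᵐ v ∂(volume.restrict (Ioo (0:ℝ) 1)),
      ENNReal.ofReal (Q v) = volume (A v) := by
    filter_upwards [ae_restrict_mem measurableSet_Ioo] with v hv
    exact ENNReal.ofReal_toReal (hAfin v hv)
  have hQlint : ∫⁻ v in Ioo (0:ℝ) 1, ENNReal.ofReal (Q v)
      = ∫⁻ x in Ioi (0:ℝ), ENNReal.ofReal (1 - F x) := by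
    rw [lintegral_congr_ae hQofReal, ← I1]
  have hQint : IntegrableOn Q (Ioo (0:ℝ) 1) := by
    refine ⟨hQmeas.aestronglyMeasurable, ?_⟩
    rw [hasFiniteIntegral_iff_ofReal (ae_of_all _ hQ0), hQlint]
    exact lt_of_le_of_lt (le_of_eq rfl) (lt_of_le_of_ne le_top hfin1)
  have hmean_lhs : ∫ x in Ioi (0:ℝ), (1 - F x)
      = (∫⁻ x in Ioi (0:ℝ), ENNReal.ofReal (1 - F x)).toReal :=
    integral_eq_lintegral_of_nonneg_ae (ae_of_all _ fun x => by simp only [Pi.zero_apply]; linarith [hF1 x]) hmean.1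
  have hQ1 : ∫ v in Ioo (0:ℝ) 1, Q v = m := by
    rw [hm, hmean_lhs,
      integral_eq_lintegral_of_nonneg_ae (ae_of_all _ hQ0) hQmeas.aestronglyMeasurable,
      hQlint]
  -- second moment
  have hQsqofReal : ∀ᵐ v ∂(volume.restrict (Ioo (0:ℝ) 1)),
      ENNReal.ofReal (Q v ^ 2) = (volume (A v)) ^ 2 := by
    filter_upwards [ae_restrict_mem measurableSet_Ioo] with v hv
    rw [ENNReal.ofReal_pow (hQ0 v), ENNReal.ofReal_toReal (hAfin v hv)]
  have hQsqlint : ∫⁻ v in Ioo (0:ℝ) 1, ENNReal.ofReal (Q v ^ 2)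
      = ∫⁻ x in Ioi (0:ℝ), ENNReal.ofReal (2 * x * (1 - F x)) := by
    rw [lintegral_congr_ae hQsqofReal, ← I2]
  have hQsqint : IntegrableOn (fun v => Q v ^ 2) (Ioo (0:ℝ) 1) := by
    refine ⟨(hQmeas.pow_const 2).aestronglyMeasurable, ?_⟩
    rw [hasFiniteIntegral_iff_ofReal (ae_of_all _ fun v => sq_nonneg (Q v)), hQsqlint]
    exact lt_of_le_of_ne le_top hfin2
  have hmom2_lhs : ∫ x in Ioi (0:ℝ), 2 * x * (1 - F x)
      = (∫⁻ x in Ioi (0:ℝ), ENNReal.ofReal (2 * x * (1 - F x))).toReal := by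
    refine integral_eq_lintegral_of_nonneg_ae ?_ hmom2.1
    filter_upwards [ae_restrict_mem measurableSet_Ioi] with x hx
    have h1 := hF1 x
    have h2 := mem_Ioi.1 hx
    simp only [Pi.zero_apply]
    nlinarith
  have hQ2 : ∫ v in Ioo (0:ℝ) 1, Q v ^ 2 = ∫ x in Ioi (0:ℝ), 2 * x * (1 - F x) := by
    rw [hmom2_lhs,
      integral_eq_lintegral_of_nonneg_ae (ae_of_all _ fun v => sq_nonneg (Q v))
        ((hQmeas.pow_const 2).aestronglyMeasurable),
      hQsqlint]
  -- order statistic integral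
  have hgQofReal : ∀ᵐ v ∂(volume.restrict (Ioo (0:ℝ) 1)),
      ENNReal.ofReal (((k:ℝ)+1) * v ^ k * Q v)
        = ENNReal.ofReal (((k:ℝ)+1) * v ^ k) * volume (A v) := by
    filter_upwards [ae_restrict_mem measurableSet_Ioo] with v hv
    have hv0 : (0:ℝ) ≤ v := hv.1.le
    rw [ENNReal.ofReal_mul (by positivity), ENNReal.ofReal_toReal (hAfin v hv)]
  have hgQmeas : Measurable fun v : ℝ => ((k:ℝ)+1) * v ^ k * Q v :=
    (measurable_const.mul (measurable_id.pow_const k)).mul hQmeas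
  have hn_lhs : ∫ x in Ioi (0:ℝ), (1 - F x ^ (k+1))
      = (∫⁻ x in Ioi (0:ℝ), ENNReal.ofReal (1 - F x ^ (k+1))).toReal := by
    refine integral_eq_lintegral_of_nonneg_ae
      (ae_of_all _ fun x => sub_nonneg.2 (pow_le_one₀ (hF0 x) (hF1 x)))
      (measurable_const.sub (hF.pow_const (k+1))).aestronglyMeasurable
  have hQn : ∫ v in Ioo (0:ℝ) 1, ((k:ℝ)+1) * v ^ k * Q v
      = ∫ x in Ioi (0:ℝ), (1 - F x ^ (k+1)) := by
    have hnn : 0 ≤ᵐ[volume.restrict (Ioo (0:ℝ) 1)]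
        fun v => ((k:ℝ)+1) * v ^ k * Q v := by
      filter_upwards [ae_restrict_mem measurableSet_Ioo] with v hv
      have hv0 : (0:ℝ) ≤ v := hv.1.le
      have := hQ0 v
      positivity
    rw [hn_lhs, integral_eq_lintegral_of_nonneg_ae hnn hgQmeas.aestronglyMeasurable,
      lintegral_congr_ae hgQofReal, ← I3]
  have hQnint : IntegrableOn (fun v => ((k:ℝ)+1) * v ^ k * Q v) (Ioo (0:ℝ) 1) := by
    refine Integrable.mono' (hQint.const_mul ((k:ℝ)+1))
      hgQmeas.aestronglyMeasurable ?_
    filter_upwards [ae_restrict_mem measurableSet_Ioo] with v hv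
    have hv0 : (0:ℝ) ≤ v := hv.1.le
    have hvk : v ^ k ≤ 1 := pow_le_one₀ hv0 hv.2.le
    have hq := hQ0 v
    rw [Real.norm_eq_abs, abs_of_nonneg (by positivity)]
    nlinarith [mul_le_mul_of_nonneg_left (mul_le_mul_of_nonneg_right hvk hq)
      (by positivity : (0:ℝ) ≤ (k:ℝ) + 1)]
  -- polynomial integrals on (0,1)
  haveI hfm : IsFiniteMeasure (volume.restrict (Ioo (0:ℝ) 1)) := by
    refine ⟨?_⟩
    rw [Measure.restrict_apply_univ, Real.volume_Ioo]
    norm_num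
  have hpolyint : ∀ j : ℕ, IntegrableOn (fun v : ℝ => v ^ j) (Ioo (0:ℝ) 1) volume :=
    fun j => ((continuous_pow j).integrableOn_Icc).mono_set Ioo_subset_Icc_self
  have hpoly : ∀ j : ℕ, ∫ v in Ioo (0:ℝ) 1, v ^ j = 1 / ((j:ℝ) + 1) := by
    intro j
    rw [← integral_Ioc_eq_integral_Ioo, ← intervalIntegral.integral_of_le zero_le_one,
      integral_pow]
    norm_num
  have hvolIoo : ∀ c : ℝ, ∫ _ in Ioo (0:ℝ) 1, c = c := by
    intro c
    rw [setIntegral_const, measureReal_def, Real.volume_Ioo]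
    norm_num
  -- variance identity
  set E2 : ℝ := ∫ x in Ioi (0:ℝ), 2 * x * (1 - F x) with hE2def
  set S : ℝ := E2 - m ^ 2 with hSdef
  have hiA : IntegrableOn (fun v => Q v ^ 2 - 2 * m * Q v) (Ioo (0:ℝ) 1) :=
    hQsqint.sub (hQint.const_mul (2 * m))
  have hsqint : IntegrableOn (fun v => (Q v - m) ^ 2) (Ioo (0:ℝ) 1) := by
    have h1 : IntegrableOn (fun v => Q v ^ 2 - 2 * m * Q v + m ^ 2) (Ioo (0:ℝ) 1) :=
      hiA.add (integrable_const _)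
    exact h1.congr (ae_of_all _ fun v => by ring)
  have hvar : ∫ v in Ioo (0:ℝ) 1, (Q v - m) ^ 2 = S := by
    have h1 : ∀ v, (Q v - m) ^ 2 = Q v ^ 2 - 2 * m * Q v + m ^ 2 := fun v => by ring
    rw [integral_congr_ae (ae_of_all _ h1),
      integral_add hiA (integrable_const _),
      integral_sub hQsqint (hQint.const_mul (2 * m)),
      integral_const_mul, hQ1, hQ2, hvolIoo]
    rw [hSdef, hE2def]
    ring
  have hS0 : 0 ≤ S := by
    rw [← hvar]
    exact integral_nonneg fun v => sq_nonneg _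
  -- expansion of the cross term
  set μn : ℝ := ∫ x in Ioi (0:ℝ), (1 - F x ^ (k + 1)) with hμndef
  have hiB : IntegrableOn (fun v => ((k:ℝ)+1) * v ^ k * Q v - Q v) (Ioo (0:ℝ) 1) :=
    hQnint.sub hQint
  have hiC : IntegrableOn (fun v => m * ((k:ℝ)+1) * v ^ k - m) (Ioo (0:ℝ) 1) :=
    ((hpolyint k).const_mul (m * ((k:ℝ)+1))).sub (integrable_const m)
  have hcrossint : IntegrableOn (fun v => (((k:ℝ)+1) * v ^ k - 1) * (Q v - m))
      (Ioo (0:ℝ) 1) := by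
    have h1 : IntegrableOn (fun v =>
        (((k:ℝ)+1) * v ^ k * Q v - Q v) - (m * ((k:ℝ)+1) * v ^ k - m)) (Ioo (0:ℝ) 1) :=
      hiB.sub hiC
    exact h1.congr (ae_of_all _ fun v => by ring)
  have hexp : ∫ v in Ioo (0:ℝ) 1, (((k:ℝ)+1) * v ^ k - 1) * (Q v - m) = μn - m := by
    have h1 : ∀ v : ℝ, (((k:ℝ)+1) * v ^ k - 1) * (Q v - m)
        = (((k:ℝ)+1) * v ^ k * Q v - Q v) - (m * ((k:ℝ)+1) * v ^ k - m) := fun v => by ring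
    rw [integral_congr_ae (ae_of_all _ h1),
      integral_sub hiB hiC,
      integral_sub hQnint hQint,
      integral_sub ((hpolyint k).const_mul (m * ((k:ℝ)+1))) (integrable_const m),
      integral_const_mul, hpoly, hQn, hQ1, hvolIoo]
    have hne : ((k:ℝ) + 1) ≠ 0 := by positivity
    rw [hμndef]
    field_simp
    ring
  -- the square polynomial integral
  set P : ℝ := (k:ℝ) ^ 2 / (2 * (k:ℝ) + 1) with hPdef
  have hpolysqint : IntegrableOn (fun v : ℝ => (((k:ℝ)+1) * v ^ k - 1) ^ 2)
      (Ioo (0:ℝ) 1) :=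
    (((continuous_const.mul (continuous_pow k)).sub continuous_const).pow 2
      ).integrableOn_Icc.mono_set Ioo_subset_Icc_self
  have hiD : IntegrableOn
      (fun v : ℝ => ((k:ℝ)+1) ^ 2 * v ^ (k * 2) - 2 * ((k:ℝ)+1) * v ^ k)
      (Ioo (0:ℝ) 1) :=
    ((hpolyint (k * 2)).const_mul (((k:ℝ)+1) ^ 2)).sub
      ((hpolyint k).const_mul (2 * ((k:ℝ)+1)))
  have hPcalc : ∫ v in Ioo (0:ℝ) 1, (((k:ℝ)+1) * v ^ k - 1) ^ 2 = P := by
    have h1 : ∀ v : ℝ, (((k:ℝ)+1) * v ^ k - 1) ^ 2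
        = (((k:ℝ)+1) ^ 2 * v ^ (k * 2) - 2 * ((k:ℝ)+1) * v ^ k) + 1 := fun v => by
      rw [pow_mul]
      ring
    rw [integral_congr_ae (ae_of_all _ h1),
      integral_add hiD (integrable_const _),
      integral_sub ((hpolyint (k * 2)).const_mul (((k:ℝ)+1) ^ 2))
        ((hpolyint k).const_mul (2 * ((k:ℝ)+1))),
      integral_const_mul, integral_const_mul, hpoly, hpoly, hvolIoo]
    have h2 : ((k * 2 : ℕ) : ℝ) = 2 * (k : ℝ) := by push_cast; ring
    rw [h2, hPdef]
    have hne1 : 2 * (k:ℝ) + 1 ≠ 0 := by positivity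
    have hne2 : (k:ℝ) + 1 ≠ 0 := by positivity
    field_simp
    ring
  have hP0 : 0 ≤ P := by rw [hPdef]; positivity
  -- AM-GM step
  have hAM : ∀ t : ℝ, 0 < t → μn - m ≤ t / 2 * P + 1 / (2 * t) * S := by
    intro t ht
    have hkey : ∀ a b : ℝ, a * b ≤ t / 2 * a ^ 2 + 1 / (2 * t) * b ^ 2 := by
      intro a b
      rw [← sub_nonneg]
      have h : t / 2 * a ^ 2 + 1 / (2 * t) * b ^ 2 - a * b = (t * a - b) ^ 2 / (2 * t) := by
        field_simp
        ring
      rw [h]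
      positivity
    have hiE : IntegrableOn (fun v : ℝ =>
        t / 2 * (((k:ℝ)+1) * v ^ k - 1) ^ 2 + 1 / (2 * t) * (Q v - m) ^ 2)
        (Ioo (0:ℝ) 1) :=
      (hpolysqint.const_mul (t / 2)).add (hsqint.const_mul (1 / (2 * t)))
    have hmono : ∫ v in Ioo (0:ℝ) 1, (((k:ℝ)+1) * v ^ k - 1) * (Q v - m)
        ≤ ∫ v in Ioo (0:ℝ) 1,
            (t / 2 * (((k:ℝ)+1) * v ^ k - 1) ^ 2 + 1 / (2 * t) * (Q v - m) ^ 2) :=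
      integral_mono hcrossint hiE fun v => hkey _ _
    rw [hexp] at hmono
    rwa [integral_add (hpolysqint.const_mul (t / 2)) (hsqint.const_mul (1 / (2 * t))),
      integral_const_mul, integral_const_mul, hPcalc, hvar] at hmono
  -- conclusion
  have hfinal := HDGaux.le_sqrt_mul_of_forall hP0 hS0 hAM
  have hσS : σ = Real.sqrt S := by rw [hσ, hSdef, hE2def]
  have hsqrtP : Real.sqrt P = (k:ℝ) / Real.sqrt (2 * (k:ℝ) + 1) := by
    rw [hPdef, Real.sqrt_div (sq_nonneg _), Real.sqrt_sq (by positivity : (0:ℝ) ≤ (k:ℝ))]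
  have hg1 : ((k + 1 : ℕ) : ℝ) - 1 = (k : ℝ) := by push_cast; ring
  have hg2 : 2 * ((k + 1 : ℕ) : ℝ) - 1 = 2 * (k:ℝ) + 1 := by push_cast; ring
  rw [hg1, hg2]
  calc μn ≤ Real.sqrt P * Real.sqrt S + m := by linarith
    _ = σ * (k:ℝ) / Real.sqrt (2 * (k:ℝ) + 1) + m := by
        rw [hsqrtP, hσS]
        ring
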